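/- Let c ≥ 1, r₀ ∈ (0,1], ν > 0, and let h : (0,r₀] → (0,∞) and n : (0,r₀] → [0,∞) be functions such that (i) h(t) ≤ c·t² for all t ∈ (0,r₀]; (ii) h(t) ≥ t²ν²/c for all t ∈ (0,r₀]; and (iii) h(s) ≤ e^{cr²/2} (s/r)^{2 + 2e^{−cr²} n(s) − 2cr²} h(r) for all 0 < s ≤ r ≤ r₀. Then there exists a constant C ≥ 1, depending only on c, such that for every ω ∈ (0, r₀/4] and every s with 0 < s ≤ ω·(min(1,ν)/c)^{1/ω}, one has n(s) ≤ C·ω. (This is the abstract content of Proposition 4.8 of the paper: if |Ψ|(x) = ν > 0, then the frequency n(s) is ≲ ω for all s ≲_ω min{1, ν^{1/ω}}.) -/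

import Mathlib

set_option maxHeartbeats 1000000


/-- If `h(t) ≍ t²` (with `h(t) ≤ c t²` and `h(t) ≥ t²ν²/c`) and `h` satisfies the
frequency-growth bound `h(s) ≤ e^{cr²/2}(s/r)^{2+2e^{−cr²}n(s)−2cr²} h(r)`, then there is a
constant `C = C(c) ≥ 1` such that `n(s) ≤ C·ω` whenever `0 < s ≤ ω·(min(1,ν)/c)^{1/ω}`
and `ω ∈ (0, r₀/4]`. -/
theorem psi_controls_frequency :
    ∀ c : ℝ, 1 ≤ c → ∃ C : ℝ, 1 ≤ C ∧
      ∀ (r₀ ν : ℝ) (h n : ℝ → ℝ),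
        0 < r₀ → r₀ ≤ 1 → 0 < ν →
        (∀ t, 0 < t → t ≤ r₀ → 0 < h t) →
        (∀ t, 0 < t → t ≤ r₀ → 0 ≤ n t) →
        (∀ t, 0 < t → t ≤ r₀ → h t ≤ c * t ^ 2) →
        (∀ t, 0 < t → t ≤ r₀ → t ^ 2 * ν ^ 2 / c ≤ h t) →
        (∀ s r : ℝ, 0 < s → s ≤ r → r ≤ r₀ →
          h s ≤ Real.exp (c * r ^ 2 / 2) *
            (s / r) ^ (2 + 2 * Real.exp (-(c * r ^ 2)) * n s - 2 * c * r ^ 2) * h r) →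
        ∀ ω : ℝ, 0 < ω → ω ≤ r₀ / 4 →
          ∀ s : ℝ, 0 < s → s ≤ ω * (min 1 ν / c) ^ (1 / ω) →
            n s ≤ C * ω := by
  intro c hc
  have hc0 : (0:ℝ) < c := lt_of_lt_of_le one_pos hc
  have hexpc : (1:ℝ) ≤ Real.exp c := by
    have := Real.add_one_le_exp c; linarith
  refine ⟨6 * c * Real.exp c, ?_, ?_⟩
  · have h6 : (1:ℝ) ≤ 6 * c := by linarith
    calc (1:ℝ) ≤ 6 * c := h6
      _ ≤ 6 * c * Real.exp c := le_mul_of_one_le_right (by linarith) hexpc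
  intro r₀ ν h n hr₀ hr₀1 hν hpos hnn hup hlow hkey ω hω hω4 s hs hsle
  obtain ⟨r, hrdef⟩ : ∃ x : ℝ, x = 4 * ω := ⟨_, rfl⟩
  have hrpos : 0 < r := by rw [hrdef]; positivity
  have hrr₀ : r ≤ r₀ := by rw [hrdef]; linarith
  have hr1 : r ≤ 1 := hrr₀.trans hr₀1
  have hmin : 0 < min 1 ν := lt_min one_pos hν
  have hm0 : 0 < min 1 ν / c := by positivity
  have hm1 : min 1 ν / c ≤ 1 := by
    rw [div_le_one hc0]; exact (min_le_left 1 ν).trans hc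
  have hpow1 : (min 1 ν / c) ^ (1 / ω) ≤ 1 :=
    Real.rpow_le_one hm0.le hm1 (by positivity)
  have hsω : s ≤ ω := hsle.trans (mul_le_of_le_one_right hω.le hpow1)
  have hsr : s < r := by rw [hrdef]; linarith
  have hsr₀ : s ≤ r₀ := by linarith
  obtain ⟨q, hqdef⟩ : ∃ x : ℝ, x = s / r := ⟨_, rfl⟩
  have hq0 : 0 < q := by rw [hqdef]; positivity
  have hq1 : q < 1 := by rw [hqdef]; exact (div_lt_one hrpos).mpr hsr
  obtain ⟨E, hEdef⟩ : ∃ x : ℝ, x = 2 + 2 * Real.exp (-(c * r ^ 2)) * n s - 2 * c * r ^ 2 := ⟨_, rfl⟩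
  obtain ⟨K, hKdef⟩ : ∃ x : ℝ, x = Real.exp (c * r ^ 2 / 2) := ⟨_, rfl⟩
  have hK0 : 0 < K := hKdef ▸ Real.exp_pos _
  obtain ⟨X, hXdef⟩ : ∃ x : ℝ, x = q ^ (E - 2) := ⟨_, rfl⟩
  have hX0 : 0 < X := hXdef ▸ Real.rpow_pos_of_pos hq0 _
  -- main chain
  have h1 : s ^ 2 * ν ^ 2 / c ≤ K * q ^ E * (c * r ^ 2) := by
    calc s ^ 2 * ν ^ 2 / c ≤ h s := hlow s hs hsr₀
      _ ≤ K * q ^ E * h r := by rw [hqdef, hEdef, hKdef]; exact hkey s r hs hsr.le hrr₀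
      _ ≤ K * q ^ E * (c * r ^ 2) :=
          mul_le_mul_of_nonneg_left (hup r hrpos hrr₀) (by positivity)
  have hsplit : q ^ E = X * q ^ 2 := by
    rw [hXdef, ← Real.rpow_two, ← Real.rpow_add hq0]
    norm_num
  have h1' : s ^ 2 * ν ^ 2 / c ≤ K * X * c * s ^ 2 := by
    have e : K * (X * q ^ 2) * (c * r ^ 2) = K * X * c * s ^ 2 := by
      rw [hqdef]; field_simp
    calc s ^ 2 * ν ^ 2 / c ≤ K * q ^ E * (c * r ^ 2) := h1
      _ = K * (X * q ^ 2) * (c * r ^ 2) := by rw [hsplit]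
      _ = K * X * c * s ^ 2 := e
  have h2 : ν ^ 2 ≤ X * (c ^ 2 * K) := by
    have hs2 : (0:ℝ) < s ^ 2 := by positivity
    have h1'' : ν ^ 2 * s ^ 2 ≤ X * (c ^ 2 * K) * s ^ 2 := by
      rw [div_le_iff₀ hc0] at h1'
      linarith [h1']
    exact le_of_mul_le_mul_right h1'' hs2
  have h3 : ν ^ 2 / (c ^ 2 * K) ≤ X := by
    rw [div_le_iff₀ (by positivity)]; exact h2
  -- take logs
  have hlog : Real.log (ν ^ 2 / (c ^ 2 * K)) ≤ (E - 2) * Real.log q := by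
    have := Real.log_le_log (by positivity) h3
    rwa [hXdef, Real.log_rpow hq0] at this
  have hlogL : Real.log (ν ^ 2 / (c ^ 2 * K)) =
      2 * Real.log ν - (2 * Real.log c + c * r ^ 2 / 2) := by
    rw [Real.log_div (by positivity) (by positivity), Real.log_mul (by positivity) hK0.ne',
      Real.log_pow, Real.log_pow, hKdef, Real.log_exp]
    push_cast; ring
  obtain ⟨L, hLdef⟩ : ∃ x : ℝ, x = Real.log r - Real.log s := ⟨_, rfl⟩
  have hlogq : Real.log q = Real.log s - Real.log r := by
    rw [hqdef]; exact Real.log_div hs.ne' hrpos.ne'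
  have hEL : (E - 2) * L ≤ 2 * Real.log c + c * r ^ 2 / 2 - 2 * Real.log ν := by
    have e : (E - 2) * Real.log q = -((E - 2) * L) := by rw [hlogq, hLdef]; ring
    rw [hlogL, e] at hlog
    linarith
  obtain ⟨A, hAdef⟩ : ∃ x : ℝ, x = Real.log c - Real.log (min 1 ν) := ⟨_, rfl⟩
  have hA0 : 0 ≤ A := by
    have h1 : 0 ≤ Real.log c := Real.log_nonneg hc
    have h2 : Real.log (min 1 ν) ≤ 0 := Real.log_nonpos hmin.le (min_le_left 1 ν)
    rw [hAdef]; linarith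
  have hlog4 : (1:ℝ) ≤ Real.log 4 := by
    rw [Real.le_log_iff_exp_le (by norm_num : (0:ℝ) < 4)]
    have := Real.exp_one_lt_d9
    linarith
  have hL1 : Real.log 4 + A / ω ≤ L := by
    have hls : Real.log s ≤ Real.log ω + (1 / ω) * (Real.log (min 1 ν) - Real.log c) := by
      calc Real.log s ≤ Real.log (ω * (min 1 ν / c) ^ (1 / ω)) :=
            Real.log_le_log hs hsle
        _ = Real.log ω + (1 / ω) * Real.log (min 1 ν / c) := by
            rw [Real.log_mul hω.ne' (by positivity), Real.log_rpow hm0]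
        _ = Real.log ω + (1 / ω) * (Real.log (min 1 ν) - Real.log c) := by
            rw [Real.log_div hmin.ne' hc0.ne']
    have hlr : Real.log r = Real.log 4 + Real.log ω := by
      rw [hrdef, Real.log_mul (by norm_num) hω.ne']
    have e : (1 / ω) * (Real.log (min 1 ν) - Real.log c) = -(A / ω) := by
      rw [hAdef]; field_simp; ring
    rw [e] at hls
    rw [hLdef, hlr]; linarith
  have hLpos : 0 < L := by
    have : 0 ≤ A / ω := by positivity
    linarith
  -- bound numerator
  have hνmin : Real.log (min 1 ν) ≤ Real.log ν := Real.log_le_log hmin (min_le_right 1 ν)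
  have hAω : A ≤ ω * L := by
    have h' : A / ω ≤ L := by linarith
    have := (div_le_iff₀ hω).mp h'
    linarith
  have hN : 2 * Real.log c + c * r ^ 2 / 2 - 2 * Real.log ν ≤ 4 * c * ω * L := by
    have hNA : 2 * Real.log c + c * r ^ 2 / 2 - 2 * Real.log ν ≤ 2 * A + 8 * c * ω ^ 2 := by
      have : c * r ^ 2 / 2 = 8 * c * ω ^ 2 := by rw [hrdef]; ring
      rw [hAdef]; linarith
    have hL1' : (1:ℝ) ≤ L := by
      have : 0 ≤ A / ω := by positivity
      linarith
    have hω14 : ω ≤ 1/4 := by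
      have : r₀ ≤ 1 := hr₀1
      linarith
    have hcω : (0:ℝ) ≤ c * ω := (mul_pos hc0 hω).le
    have t2 : 8 * c * ω ^ 2 ≤ 2 * c * ω := by
      have := mul_le_mul_of_nonneg_left hω14 (by linarith : (0:ℝ) ≤ 8 * (c * ω))
      linarith [this]
    have t3 : 2 * c * ω ≤ 2 * c * ω * L :=
      le_mul_of_one_le_right (by linarith) hL1'
    have t4 : 2 * (ω * L) ≤ 2 * c * ω * L := by
      have := mul_le_mul_of_nonneg_right hc (mul_pos hω hLpos).le
      linarith [this]
    linarith [hAω]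
  have hE4 : E - 2 ≤ 4 * c * ω := by
    have : (E - 2) * L ≤ (4 * c * ω) * L := le_trans hEL hN
    exact le_of_mul_le_mul_right this hLpos
  -- unwind E
  have hexp1 : Real.exp (-(c * r ^ 2)) * Real.exp (c * r ^ 2) = 1 := by
    rw [← Real.exp_add]; simp
  have hexpr : Real.exp (c * r ^ 2) ≤ Real.exp c := by
    apply Real.exp_le_exp.mpr
    have hr2 : r ^ 2 ≤ 1 := pow_le_one₀ hrpos.le hr1
    exact mul_le_of_le_one_right hc0.le hr2
  have hns : n s ≤ 6 * c * ω * Real.exp (c * r ^ 2) := by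
    have hE' : 2 * Real.exp (-(c * r ^ 2)) * n s ≤ 4 * c * ω + 2 * c * r ^ 2 := by
      rw [hEdef] at hE4; linarith
    have hr2 : 2 * c * r ^ 2 ≤ 8 * c * ω := by
      have hω14 : ω ≤ 1/4 := by linarith
      have := mul_le_mul_of_nonneg_left hω14
        (by positivity : (0:ℝ) ≤ 32 * c * ω)
      rw [hrdef]; linarith [this]
      
    have h12 : 2 * Real.exp (-(c * r ^ 2)) * n s ≤ 12 * c * ω := by linarith
    have hep : 0 < Real.exp (c * r ^ 2) := Real.exp_pos _
    have h13 := mul_le_mul_of_nonneg_right h12 hep.le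
    have e : 2 * Real.exp (-(c * r ^ 2)) * n s * Real.exp (c * r ^ 2)
        = 2 * n s * (Real.exp (-(c * r ^ 2)) * Real.exp (c * r ^ 2)) := by ring
    rw [e, hexp1, mul_one] at h13
    linarith
  calc n s ≤ 6 * c * ω * Real.exp (c * r ^ 2) := hns
    _ ≤ 6 * c * Real.exp c * ω := by
        have := mul_le_mul_of_nonneg_left hexpr (by positivity : (0:ℝ) ≤ 6 * c * ω)
        linarith
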